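/- Let T' := [T_1' ⋯ T_n'] be a row contraction on H' and let A : F²(Hₙ) → H' be a contraction with ‖A‖ = 1 that attains its norm and satisfies A S_i = T_i' A for i = 1,…,n. Then M := D_A-range complement, namely M := closure(D_A F²(Hₙ)) ⊖ ⋁_{i=1}^n D_A S_i F²(Hₙ), is {0}. Moreover, A attains its norm at some vector f ∈ F²(Hₙ) with f(0) ≠ 0. -/

import Mathlib

open scoped InnerProductSpace

set_option maxHeartbeats 2000000 in
open ContinuousLinearMap in
/-- Let `F` be a model of the full Fock space `F²(Hₙ)` (creation operators
`S_i`, vacuum `Ω` with cyclic translates), `T' = [T_1' ⋯ T_n']` a row contraction on `H'`,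
and `A : F → H'` a contraction of norm one that attains its norm and satisfies
`A S_i = T_i' A`.  Then `M := closure(D_A F) ⊖ ⋁_i D_A S_i F = {0}` (every vector of
`closure(range D_A)` orthogonal to all `D_A S_i x` vanishes), and `A` attains its norm at
some `f` with `f(0) = ⟨Ω, f⟩ ≠ 0`. -/
theorem stmt_15 {F H' : Type*}
    [NormedAddCommGroup F] [InnerProductSpace ℂ F] [CompleteSpace F]
    [NormedAddCommGroup H'] [InnerProductSpace ℂ H'] [CompleteSpace H']
    {n : ℕ} (S : Fin n → F →L[ℂ] F)
    (hSiso : ∀ i (x : F), ‖S i x‖ = ‖x‖)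
    (hSorth : ∀ i j, i ≠ j → ContinuousLinearMap.adjoint (S i) ∘L S j = 0)
    (Sw : List (Fin n) → F →L[ℂ] F) (hSw_nil : Sw [] = 1)
    (hSw_cons : ∀ i w, Sw (i :: w) = S i ∘L Sw w)
    (Ω : F) (hΩ : ‖Ω‖ = 1) (hSΩ : ∀ i, ContinuousLinearMap.adjoint (S i) Ω = 0)
    (hspan : (Submodule.span ℂ
        (Set.range fun w : List (Fin n) => Sw w Ω)).topologicalClosure = ⊤)
    (T' : Fin n → H' →L[ℂ] H')
    (hrow : ((1 : H' →L[ℂ] H')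
        - ∑ i, T' i ∘L ContinuousLinearMap.adjoint (T' i)).IsPositive)
    (A : F →L[ℂ] H') (hAnorm : ‖A‖ = 1)
    (hattain : ∃ h : F, ‖h‖ = 1 ∧ ‖A h‖ = 1)
    (hint : ∀ i, A ∘L S i = T' i ∘L A)
    (DA : F →L[ℂ] F) (hDApos : DA.IsPositive)
    (hDA : DA ∘L DA = 1 - ContinuousLinearMap.adjoint A ∘L A) :
    (∀ y : F, y ∈ (LinearMap.range (DA : F →ₗ[ℂ] F)).topologicalClosure →
        (∀ i (x : F), ⟪DA (S i x), y⟫_ℂ = (0 : ℂ)) → y = 0) ∧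
    ∃ f : F, ‖f‖ = 1 ∧ ‖A f‖ = 1 ∧ ⟪Ω, f⟫_ℂ ≠ (0 : ℂ) := by
  classical
  have hsa : ContinuousLinearMap.adjoint DA = DA := hDApos.isSelfAdjoint.adjoint_eq
  have hDAsa : ∀ u v : F, ⟪DA u, v⟫_ℂ = ⟪u, DA v⟫_ℂ := by
    intro u v
    conv_rhs => rw [← hsa]
    rw [adjoint_inner_right]
  -- key identity : ⟪DA x, DA x⟫ = ‖x‖² - ‖A x‖²
  have hkey : ∀ x : F, ⟪DA x, DA x⟫_ℂ = (‖x‖ : ℂ) ^ 2 - (‖A x‖ : ℂ) ^ 2 := by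
    intro x
    have h1 : DA (DA x) = x - ContinuousLinearMap.adjoint A (A x) := by
      have := congrArg (fun (B : F →L[ℂ] F) => B x) hDA
      simpa using this
    rw [hDAsa x (DA x), h1, inner_sub_right, adjoint_inner_right,
      inner_self_eq_norm_sq_to_K, inner_self_eq_norm_sq_to_K]
    norm_cast
  have hker : ∀ x : F, ‖A x‖ = ‖x‖ → DA x = 0 := by
    intro x hx
    have : ⟪DA x, DA x⟫_ℂ = 0 := by rw [hkey, hx]; ring
    exact inner_self_eq_zero.mp this
  have hker' : ∀ x : F, DA x = 0 → ‖A x‖ = ‖x‖ := by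
    intro x hx
    have h0 : ⟪DA x, DA x⟫_ℂ = 0 := by rw [hx]; simp
    rw [hkey] at h0
    have h1 : (‖x‖ : ℂ) ^ 2 = (‖A x‖ : ℂ) ^ 2 := by linear_combination h0
    have h2 : ‖x‖ ^ 2 = ‖A x‖ ^ 2 := by exact_mod_cast h1
    nlinarith [norm_nonneg x, norm_nonneg (A x)]
  have hAAad : ∀ x : F, DA x = 0 → ContinuousLinearMap.adjoint A (A x) = x := by
    intro x hx
    have h1 : DA (DA x) = x - ContinuousLinearMap.adjoint A (A x) := by
      have := congrArg (fun (B : F →L[ℂ] F) => B x) hDA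
      simpa using this
    rw [hx, map_zero] at h1
    have := h1.symm
    rwa [sub_eq_zero, eq_comm] at this
  have hA'le : ∀ v : H', ‖ContinuousLinearMap.adjoint A v‖ ≤ ‖v‖ := by
    intro v
    calc ‖ContinuousLinearMap.adjoint A v‖ ≤ ‖ContinuousLinearMap.adjoint A‖ * ‖v‖ :=
          (ContinuousLinearMap.adjoint A).le_opNorm v
    _ = ‖v‖ := by rw [ContinuousLinearMap.adjoint.norm_map, hAnorm, one_mul]
  have hAle : ∀ x : F, ‖A x‖ ≤ ‖x‖ := by
    intro x
    calc ‖A x‖ ≤ ‖A‖ * ‖x‖ := A.le_opNorm x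
    _ = ‖x‖ := by rw [hAnorm, one_mul]
  -- S_j† S_j = 1
  have hSS : ∀ j (v : F), ContinuousLinearMap.adjoint (S j) (S j v) = v := by
    intro j v
    have h1 := (ContinuousLinearMap.norm_map_iff_adjoint_comp_self (S j)).mp (hSiso j)
    have := congrArg (fun (B : F →L[ℂ] F) => B v) h1
    simpa using this
  -- the operator identity ∑ S_i S_i† + |Ω⟩⟨Ω| = 1
  set C : F →L[ℂ] F := (1 : F →L[ℂ] F) - (∑ i, S i ∘L ContinuousLinearMap.adjoint (S i))
      - (innerSL ℂ Ω).smulRight Ω with hCdef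
  have hCapp : ∀ x : F,
      C x = x - (∑ i, S i (ContinuousLinearMap.adjoint (S i) x)) - ⟪Ω, x⟫_ℂ • Ω := by
    intro x
    simp [hCdef, ContinuousLinearMap.sum_apply]
  have hCker : ∀ w : List (Fin n), C (Sw w Ω) = 0 := by
    intro w
    cases w with
    | nil =>
        rw [hSw_nil]
        have hΩΩ : ⟪Ω, Ω⟫_ℂ = 1 := by
          rw [inner_self_eq_norm_sq_to_K, hΩ]; norm_num
        have : C Ω = Ω - (∑ i, S i (ContinuousLinearMap.adjoint (S i) Ω)) - ⟪Ω, Ω⟫_ℂ • Ω :=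
          hCapp Ω
        simp [this, hSΩ, hΩΩ, hΩ]
    | cons i w =>
        rw [hSw_cons]
        set v := Sw w Ω with hv
        have h1 : (∑ j, S j (ContinuousLinearMap.adjoint (S j) (S i v))) = S i v := by
          rw [Finset.sum_eq_single i]
          · rw [hSS]
          · intro j _ hj
            have h0 : ContinuousLinearMap.adjoint (S j) ((S i) v) = 0 := by
              simpa using congrArg (fun (B : F →L[ℂ] F) => B v) (hSorth j i hj)
            rw [h0, map_zero]
          · intro hi; exact absurd (Finset.mem_univ i) hi
        have h2 : ⟪Ω, S i v⟫_ℂ = 0 := by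
          rw [← adjoint_inner_left, hSΩ, inner_zero_left]
        simp [hCapp, ← hv, h1, h2]
  have hC0 : ∀ x : F, C x = 0 := by
    have hle : (Submodule.span ℂ (Set.range fun w : List (Fin n) => Sw w Ω)) ≤
        LinearMap.ker (C : F →ₗ[ℂ] F) := by
      rw [Submodule.span_le]
      rintro _ ⟨w, rfl⟩
      exact hCker w
    have hcl : (Submodule.span ℂ
        (Set.range fun w : List (Fin n) => Sw w Ω)).topologicalClosure ≤ LinearMap.ker (C : F →ₗ[ℂ] F) :=
      Submodule.topologicalClosure_minimal _ hle (ContinuousLinearMap.isClosed_ker C)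
    rw [hspan] at hcl
    intro x
    exact hcl (Submodule.mem_top (x := x))
  have hId : ∀ x : F, x = (∑ i, S i (ContinuousLinearMap.adjoint (S i) x)) + ⟪Ω, x⟫_ℂ • Ω := by
    intro x
    have h0 := hC0 x
    rw [hCapp, sub_sub, sub_eq_zero] at h0
    exact h0
  -- row contraction bound
  have hTrow : ∀ v : H', ∑ i, ‖ContinuousLinearMap.adjoint (T' i) v‖ ^ 2 ≤ ‖v‖ ^ 2 := by
    intro v
    have h0 := hrow.2 v
    have h1 : (((1 : H' →L[ℂ] H')
        - ∑ i, T' i ∘L ContinuousLinearMap.adjoint (T' i)) v) =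
        v - ∑ i, T' i (ContinuousLinearMap.adjoint (T' i) v) := by
      simp [ContinuousLinearMap.sum_apply]
    rw [ContinuousLinearMap.reApplyInnerSelf, h1] at h0
    have h2 : ⟪v - ∑ i, T' i (ContinuousLinearMap.adjoint (T' i) v), v⟫_ℂ =
        (‖v‖ : ℂ) ^ 2 - ∑ i, (‖ContinuousLinearMap.adjoint (T' i) v‖ : ℂ) ^ 2 := by
      rw [inner_sub_left, sum_inner, inner_self_eq_norm_sq_to_K]
      congr 1
      refine Finset.sum_congr rfl fun i _ => ?_
      rw [← adjoint_inner_right, inner_self_eq_norm_sq_to_K]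
      norm_cast
    rw [h2] at h0
    have h3 : RCLike.re ((‖v‖ : ℂ) ^ 2 - ∑ i, (‖ContinuousLinearMap.adjoint (T' i) v‖ : ℂ) ^ 2) =
        ‖v‖ ^ 2 - ∑ i, ‖ContinuousLinearMap.adjoint (T' i) v‖ ^ 2 := by
      rw [map_sub, map_sum]
      norm_num [← Complex.ofReal_pow]
    rw [h3] at h0
    linarith
  -- norm attainment for the adjoint
  have hAA' : ∀ v : H', ‖ContinuousLinearMap.adjoint A v‖ = ‖v‖ →
      A (ContinuousLinearMap.adjoint A v) = v := by
    intro v hv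
    have h1 : ‖v - A (ContinuousLinearMap.adjoint A v)‖ ^ 2 =
        ‖v‖ ^ 2 - 2 * RCLike.re (⟪v, A (ContinuousLinearMap.adjoint A v)⟫_ℂ)
          + ‖A (ContinuousLinearMap.adjoint A v)‖ ^ 2 := norm_sub_sq v _
    have h2 : ⟪v, A (ContinuousLinearMap.adjoint A v)⟫_ℂ =
        (‖v‖ : ℂ) ^ 2 := by
      rw [← adjoint_inner_left, inner_self_eq_norm_sq_to_K, hv]
      norm_cast
    rw [h2] at h1
    have h3 : RCLike.re ((‖v‖ : ℂ) ^ 2) = ‖v‖ ^ 2 := by norm_cast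
    rw [h3] at h1
    have h4 : ‖A (ContinuousLinearMap.adjoint A v)‖ ≤ ‖v‖ := by
      calc ‖A (ContinuousLinearMap.adjoint A v)‖ ≤ ‖ContinuousLinearMap.adjoint A v‖ :=
            hAle _
      _ = ‖v‖ := hv
    have h5 : ‖v - A (ContinuousLinearMap.adjoint A v)‖ ^ 2 ≤ 0 := by
      nlinarith [norm_nonneg (A (ContinuousLinearMap.adjoint A v))]
    have h6 : ‖v - A (ContinuousLinearMap.adjoint A v)‖ = 0 := by
      nlinarith [norm_nonneg (v - A (ContinuousLinearMap.adjoint A v))]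
    have := norm_eq_zero.mp h6
    rw [sub_eq_zero] at this
    exact this.symm
  -- the step lemma : ker DA (⊥ Ω) is invariant under S_i†
  have hstep : ∀ g : F, DA g = 0 → ⟪Ω, g⟫_ℂ = 0 →
      ∀ i, DA (ContinuousLinearMap.adjoint (S i) g) = 0 := by
    intro g hg hgΩ
    have hAg : ‖A g‖ = ‖g‖ := hker' g hg
    have hg' : ContinuousLinearMap.adjoint A (A g) = g := hAAad g hg
    have hSg : ∀ i, ContinuousLinearMap.adjoint (S i) g =
        ContinuousLinearMap.adjoint A (ContinuousLinearMap.adjoint (T' i) (A g)) := by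
      intro i
      conv_lhs => rw [← hg']
      have h1 : ContinuousLinearMap.adjoint (S i) ∘L ContinuousLinearMap.adjoint A =
          ContinuousLinearMap.adjoint A ∘L ContinuousLinearMap.adjoint (T' i) := by
        rw [← ContinuousLinearMap.adjoint_comp, ← ContinuousLinearMap.adjoint_comp, hint]
      exact congrArg (fun (B : H' →L[ℂ] F) => B (A g)) h1
    -- sum identities
    have hsb : ∑ i, ‖ContinuousLinearMap.adjoint (S i) g‖ ^ 2 = ‖g‖ ^ 2 := by
      have h1 : g = ∑ i, S i (ContinuousLinearMap.adjoint (S i) g) := by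
        have := hId g
        rw [hgΩ, zero_smul, add_zero] at this
        exact this
      have h2 : ⟪g, g⟫_ℂ = ∑ i, (‖ContinuousLinearMap.adjoint (S i) g‖ : ℂ) ^ 2 := by
        conv_lhs => rw [h1]
        rw [sum_inner]
        refine Finset.sum_congr rfl fun i _ => ?_
        rw [← adjoint_inner_right, ← h1, inner_self_eq_norm_sq_to_K]
        norm_cast
      rw [inner_self_eq_norm_sq_to_K] at h2
      norm_cast at h2
      exact (Complex.ofReal_injective h2).symm
    have hba : ∀ i : Fin n, ‖ContinuousLinearMap.adjoint (S i) g‖ ^ 2 ≤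
        ‖ContinuousLinearMap.adjoint (T' i) (A g)‖ ^ 2 := by
      intro i
      rw [hSg i]
      have := hA'le (ContinuousLinearMap.adjoint (T' i) (A g))
      nlinarith [norm_nonneg (ContinuousLinearMap.adjoint A
        (ContinuousLinearMap.adjoint (T' i) (A g)))]
    have hsa' : ∑ i, ‖ContinuousLinearMap.adjoint (T' i) (A g)‖ ^ 2 ≤ ‖g‖ ^ 2 := by
      have := hTrow (A g)
      rwa [hAg] at this
    have hsum_le : ∑ i, ‖ContinuousLinearMap.adjoint (S i) g‖ ^ 2 ≤
        ∑ i, ‖ContinuousLinearMap.adjoint (T' i) (A g)‖ ^ 2 :=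
      Finset.sum_le_sum fun i _ => hba i
    have hsum_eq : ∑ i, ‖ContinuousLinearMap.adjoint (S i) g‖ ^ 2 =
        ∑ i, ‖ContinuousLinearMap.adjoint (T' i) (A g)‖ ^ 2 := le_antisymm hsum_le
      (by rw [hsb]; exact hsa')
    have heach := (Finset.sum_eq_sum_iff_of_le (fun i _ => hba i)).mp hsum_eq
    intro i
    have hi : ‖ContinuousLinearMap.adjoint (S i) g‖ ^ 2 =
        ‖ContinuousLinearMap.adjoint (T' i) (A g)‖ ^ 2 := heach i (Finset.mem_univ i)
    have hni : ‖ContinuousLinearMap.adjoint (S i) g‖ =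
        ‖ContinuousLinearMap.adjoint (T' i) (A g)‖ := by
      nlinarith [norm_nonneg (ContinuousLinearMap.adjoint (S i) g),
        norm_nonneg (ContinuousLinearMap.adjoint (T' i) (A g))]
    set v := ContinuousLinearMap.adjoint (T' i) (A g) with hvdef
    have hAv : ‖ContinuousLinearMap.adjoint A v‖ = ‖v‖ := by
      rw [← hSg i]; exact hni
    have hAAv : A (ContinuousLinearMap.adjoint A v) = v := hAA' v hAv
    apply hker
    rw [hSg i, hAAv, hAv]
  -- Part 2
  obtain ⟨h, hh1, hAh⟩ := hattain
  have hDAh : DA h = 0 := hker h (by rw [hAh, hh1])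
  have P2 : ∃ f : F, ‖f‖ = 1 ∧ ‖A f‖ = 1 ∧ ⟪Ω, f⟫_ℂ ≠ (0 : ℂ) := by
    by_contra hc
    push_neg at hc
    have hO : ∀ g : F, DA g = 0 → ⟪Ω, g⟫_ℂ = 0 := by
      intro g hg
      rcases eq_or_ne g 0 with rfl | hg0
      · simp
      · have hgn : ‖g‖ ≠ 0 := norm_ne_zero_iff.mpr hg0
        set c : ℂ := ((‖g‖ : ℝ) : ℂ)⁻¹ with hcdef
        have hnc : ‖c‖ = ‖g‖⁻¹ := by
          rw [hcdef, norm_inv, Complex.norm_real, Real.norm_eq_abs,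
            abs_of_nonneg (norm_nonneg g)]
        have h1 : ‖c • g‖ = 1 := by
          rw [norm_smul, hnc, inv_mul_cancel₀ hgn]
        have h2 : ‖A (c • g)‖ = 1 := by
          rw [map_smul, norm_smul, hnc, hker' g hg, inv_mul_cancel₀ hgn]
        have h3 := hc (c • g) h1 h2
        rw [inner_smul_right] at h3
        have hcne : c ≠ 0 := by
          rw [hcdef]
          simp [hgn]
        exact (mul_eq_zero.mp h3).resolve_left hcne
    -- kernel of DA is invariant under all adjoint Sw w
    have hword : ∀ (w : List (Fin n)) (g : F), DA g = 0 →
        DA (ContinuousLinearMap.adjoint (Sw w) g) = 0 := by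
      intro w
      induction w with
      | nil =>
          intro g hg
          rw [hSw_nil]
          have : ContinuousLinearMap.adjoint (1 : F →L[ℂ] F) = 1 := by
            rw [← ContinuousLinearMap.star_eq_adjoint, star_one]
          rw [this]
          simpa using hg
      | cons i w ih =>
          intro g hg
          rw [hSw_cons, ContinuousLinearMap.adjoint_comp, ContinuousLinearMap.comp_apply]
          exact ih _ (hstep g hg (hO g hg) i)
    have horth : ∀ w : List (Fin n), ⟪h, Sw w Ω⟫_ℂ = 0 := by
      intro w
      have h1 : DA (ContinuousLinearMap.adjoint (Sw w) h) = 0 := hword w h hDAh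
      have h2 := hO _ h1
      rw [adjoint_inner_right] at h2
      rw [← inner_conj_symm, h2, map_zero]
    have hker2 : (Submodule.span ℂ (Set.range fun w : List (Fin n) => Sw w Ω)) ≤
        LinearMap.ker (innerSL ℂ h : F →ₗ[ℂ] ℂ) := by
      rw [Submodule.span_le]
      rintro _ ⟨w, rfl⟩
      exact horth w
    have hcl : (Submodule.span ℂ
        (Set.range fun w : List (Fin n) => Sw w Ω)).topologicalClosure ≤
        LinearMap.ker (innerSL ℂ h : F →ₗ[ℂ] ℂ) :=
      Submodule.topologicalClosure_minimal _ hker2 (ContinuousLinearMap.isClosed_ker _)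
    rw [hspan] at hcl
    have : ⟪h, h⟫_ℂ = 0 := hcl (Submodule.mem_top (x := h))
    have hhz : h = 0 := inner_self_eq_zero.mp this
    rw [hhz, norm_zero] at hh1
    exact one_ne_zero hh1.symm
  refine ⟨?_, P2⟩
  -- Part 1
  intro y hy hyo
  obtain ⟨f, hf1, hAf, hfΩ⟩ := P2
  have hDAf : DA f = 0 := hker f (by rw [hAf, hf1])
  have hz : ∀ i, ContinuousLinearMap.adjoint (S i) (DA y) = 0 := by
    intro i
    refine ext_inner_right ℂ fun x => ?_
    rw [adjoint_inner_left, hDAsa, inner_zero_left, ← inner_conj_symm, hyo i x, map_zero]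
  have hzΩ : DA y = ⟪Ω, DA y⟫_ℂ • Ω := by
    have := hId (DA y)
    simp only [hz, map_zero, Finset.sum_const_zero, zero_add] at this
    exact this
  have hcf : ⟪DA y, f⟫_ℂ = 0 := by
    rw [hDAsa, hDAf, inner_zero_right]
  have hc0 : ⟪Ω, DA y⟫_ℂ = 0 := by
    rw [hzΩ, inner_smul_left] at hcf
    rcases mul_eq_zero.mp hcf with h1 | h1
    · have := congrArg (starRingEnd ℂ) h1
      simpa using this
    · exact absurd h1 hfΩ
  have hDAy : DA y = 0 := by rw [hzΩ, hc0, zero_smul]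
  -- y ∈ closure(range DA) and y ⊥ range DA
  have hyorth : y ∈ (LinearMap.range (DA : F →ₗ[ℂ] F))ᗮ := by
    rw [Submodule.mem_orthogonal]
    rintro _ ⟨x, rfl⟩
    rw [ContinuousLinearMap.coe_coe, hDAsa, hDAy, inner_zero_right]
  have hyin : y ∈ ((LinearMap.range (DA : F →ₗ[ℂ] F))ᗮ)ᗮ := by
    have hle : (LinearMap.range (DA : F →ₗ[ℂ] F)).topologicalClosure ≤ ((LinearMap.range (DA : F →ₗ[ℂ] F))ᗮ)ᗮ :=
      Submodule.topologicalClosure_minimal _ (LinearMap.range (DA : F →ₗ[ℂ] F)).le_orthogonal_orthogonal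
        (Submodule.isClosed_orthogonal ((LinearMap.range (DA : F →ₗ[ℂ] F))ᗮ))
    exact hle hy
  have : ⟪y, y⟫_ℂ = 0 := (Submodule.mem_orthogonal _ y).mp hyin y hyorth
  exact inner_self_eq_zero.mp this
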